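/- arXiv:2211.11088 — 2 statements merged into one kernel-verified Lean document; each statement's English description precedes it below -/
import Mathlib

section
/- (Theorem 1, net production zone) Let δ_t ∈ [0, (T−t−1)·v̄] satisfy −π_t⁻ ∈ h_{t+1}(δ_t). Then the decision d*_i = l_i(π_t⁻) for every i together with v* = min{v̄, max{y_t − δ_t, 0}} is an optimal solution of the Bellman equation at time t whenever v* + Σ_i d*_i < r_t; equivalently, (v*, d*) solves the convex program P⁻: maximize Σ_i U_i(d_i) − π_t⁻(v + Σ_i d_i − r_t) + V̄_{t+1}(y_t − v) subject to v + Σ_i d_i ≤ r_t, d ∈ D, v ∈ [0, min{v̄, y_t}], with the net-production constraint inactive. -/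
open MeasureTheory Set

/-- NEM X payment for net consumption `z` with buy price `pp` and sell price `pm`. -/
noncomputable def NEMPayment (pp pm z : ℝ) : ℝ := pp * max z 0 - pm * max (-z) 0

/-- The superdifferential of a function `f : ℝ → ℝ` (viewed as a concave function
on `[0, ∞)`) at a point `y`. -/
def superdiff (f : ℝ → ℝ) (y : ℝ) : Set ℝ :=
  {s | ∀ z, 0 ≤ z → f z ≤ f y + s * (z - y)}

/-- Data of the EV-charging / flexible-consumption dynamic program over horizon
`{0, …, T-1}` with `K` flexible loads, under NEM time-of-use prices. -/
structure EVModel (K T : ℕ) (Ω : Type) [MeasurableSpace Ω] where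
  /-- underlying probability measure -/
  μ : Measure Ω
  prob : IsProbabilityMeasure μ
  /-- consumption upper bounds -/
  dbar : Fin K → ℝ
  dbar_pos : ∀ i, 0 < dbar i
  /-- device utility functions -/
  U : Fin K → ℝ → ℝ
  U_strictConcave : ∀ i, StrictConcaveOn ℝ (Icc 0 (dbar i)) (U i)
  U_strictMono : ∀ i, StrictMonoOn (U i) (Icc 0 (dbar i))
  U_diff : ∀ i, ∀ x ∈ Icc 0 (dbar i), DifferentiableWithinAt ℝ (U i) (Icc 0 (dbar i)) x
  U_contDeriv : ∀ i, ContinuousOn (fun x => derivWithin (U i) (Icc 0 (dbar i)) x) (Icc 0 (dbar i))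
  U_zero : ∀ i, U i 0 = 0
  /-- renewable processes -/
  r : ℕ → Ω → ℝ
  r_meas : ∀ t, Measurable (r t)
  r_nonneg : ∀ t ω, 0 ≤ r t ω
  r_int : ∀ t, Integrable (r t) μ
  r_indep : ProbabilityTheory.iIndepFun r μ
  /-- time-of-use buy prices `π_t⁺` -/
  pip : ℕ → ℝ
  /-- time-of-use sell prices `π_t⁻` -/
  pim : ℕ → ℝ
  /-- maximal per-period EV charge -/
  vbar : ℝ
  vbar_pos : 0 < vbar
  /-- per-unit penalty for unmet EV demand at the horizon -/
  γ : ℝ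
  /-- `π_off⁻ = min_t π_t⁻` -/
  pioff : ℝ
  pioff_le : ∀ t < T, pioff ≤ pim t
  pioff_attained : ∃ t < T, pioff = pim t
  /-- assumption A1 -/
  A1 : ∀ t < T, 0 < pim t ∧ pim t ≤ pip t ∧ pip t < γ

namespace EVModel

variable {K T : ℕ} {Ω : Type} [MeasurableSpace Ω]

/-- Stage reward `g_t(x_t, v, d)`. -/
noncomputable def stage (M : EVModel K T Ω) (t : ℕ) (rt v : ℝ) (d : Fin K → ℝ) : ℝ :=
  ∑ i, M.U i (d i) - NEMPayment (M.pip t) (M.pim t) (v + ∑ i, d i - rt)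

/-- Feasible decisions `(v, d)` given remaining demand `y`. -/
def feas (M : EVModel K T Ω) (y : ℝ) : Set (ℝ × (Fin K → ℝ)) :=
  {p | p.1 ∈ Icc 0 (min M.vbar y) ∧ ∀ i, p.2 i ∈ Icc 0 (M.dbar i)}

/-- Value function indexed by `k = T - 1 - t`, the number of remaining periods after
the current one. -/
noncomputable def W (M : EVModel K T Ω) : ℕ → ℝ → ℝ → ℝ
  | 0 => fun y rt => sSup ((fun p : ℝ × (Fin K → ℝ) =>
      M.stage (T - 1) rt p.1 p.2 - M.γ * (y - p.1)) '' M.feas y)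
  | (k + 1) => fun y rt => sSup ((fun p : ℝ × (Fin K → ℝ) =>
      M.stage (T - 2 - k) rt p.1 p.2 +
        ∫ ω, M.W k (y - p.1) (M.r (T - 1 - k) ω) ∂M.μ) '' M.feas y)

/-- Value function `V_t(y, r_t)` (the price argument is determined by `t`). -/
noncomputable def V (M : EVModel K T Ω) (t : ℕ) (y rt : ℝ) : ℝ := M.W (T - 1 - t) y rt

/-- Expected value function `V̄_t(y) = E[V_t(y, r_t, π_t)]`. -/
noncomputable def Vbar (M : EVModel K T Ω) (t : ℕ) (y : ℝ) : ℝ := ∫ ω, M.V t y (M.r t ω) ∂M.μ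

/-- Objective of the Bellman equation at time `t` in state `(y, rt)`. -/
noncomputable def bellObj (M : EVModel K T Ω) (t : ℕ) (y rt : ℝ) (p : ℝ × (Fin K → ℝ)) : ℝ :=
  if t = T - 1 then M.stage t rt p.1 p.2 - M.γ * (y - p.1)
  else M.stage t rt p.1 p.2 + ∫ ω, M.V (t + 1) (y - p.1) (M.r (t + 1) ω) ∂M.μ

/-- `(v, d)` is an optimal solution of the Bellman equation at time `t`. -/
def IsBellmanOpt (M : EVModel K T Ω) (t : ℕ) (y rt : ℝ) (p : ℝ × (Fin K → ℝ)) : Prop :=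
  p ∈ M.feas y ∧ ∀ q ∈ M.feas y, M.bellObj t y rt q ≤ M.bellObj t y rt p

/-- Superdifferential `h_t` of the concave expected value function `V̄_t`. -/
noncomputable def h (M : EVModel K T Ω) (t : ℕ) (y : ℝ) : Set ℝ := superdiff (M.Vbar t) y

end EVModel
section NEMLemmas

lemma nem_eq_max {pp pm : ℝ} (h : pm ≤ pp) (z : ℝ) :
    NEMPayment pp pm z = max (pp * z) (pm * z) := by
  unfold NEMPayment
  rcases le_total z 0 with hz | hz
  · rw [max_eq_right hz, max_eq_left (neg_nonneg.2 hz), max_eq_right (by nlinarith)]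
    ring
  · rw [max_eq_left hz, max_eq_right (neg_nonpos.2 hz), max_eq_left (by nlinarith)]
    ring

lemma nem_ge {pp pm : ℝ} (h : pm ≤ pp) (z : ℝ) : pm * z ≤ NEMPayment pp pm z := by
  rw [nem_eq_max h]; exact le_max_right _ _

lemma nem_of_nonpos {pp pm z : ℝ} (hz : z ≤ 0) : NEMPayment pp pm z = pm * z := by
  unfold NEMPayment
  rw [max_eq_right hz, max_eq_left (neg_nonneg.2 hz)]
  ring

lemma nem_mono {pp pm : ℝ} (h0 : 0 ≤ pm) (h : pm ≤ pp) {z' z : ℝ} (hz : z' ≤ z) :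
    NEMPayment pp pm z' ≤ NEMPayment pp pm z := by
  rw [nem_eq_max h, nem_eq_max h]
  have hpp : 0 ≤ pp := h0.trans h
  exact max_le (le_max_of_le_left (by nlinarith)) (le_max_of_le_right (by nlinarith))

lemma nem_lip {pp pm : ℝ} (h0 : 0 ≤ pm) (h : pm ≤ pp) {z' z : ℝ} (hz : z' ≤ z) :
    NEMPayment pp pm z ≤ NEMPayment pp pm z' + pp * (z - z') := by
  rw [nem_eq_max h, nem_eq_max h]
  have h1 := le_max_left (pp * z') (pm * z')
  have h2 := le_max_right (pp * z') (pm * z')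
  apply max_le
  · nlinarith
  · nlinarith

lemma nem_convex {pp pm : ℝ} (h : pm ≤ pp) {a b z1 z2 : ℝ}
    (ha : 0 ≤ a) (hb : 0 ≤ b) (hab : a + b = 1) :
    NEMPayment pp pm (a * z1 + b * z2) ≤ a * NEMPayment pp pm z1 + b * NEMPayment pp pm z2 := by
  rw [nem_eq_max h, nem_eq_max h, nem_eq_max h]
  have h1 := le_max_left (pp * z1) (pm * z1)
  have h2 := le_max_right (pp * z1) (pm * z1)
  have h3 := le_max_left (pp * z2) (pm * z2)
  have h4 := le_max_right (pp * z2) (pm * z2)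
  apply max_le
  · nlinarith [mul_le_mul_of_nonneg_left h1 ha, mul_le_mul_of_nonneg_left h3 hb]
  · nlinarith [mul_le_mul_of_nonneg_left h2 ha, mul_le_mul_of_nonneg_left h4 hb]

end NEMLemmas

section SupLemmas

open Set

lemma sSup_image_le {α : Type*} {F : Set α} (hF : F.Nonempty) {f : α → ℝ} {c : ℝ}
    (h : ∀ p ∈ F, f p ≤ c) : sSup (f '' F) ≤ c :=
  csSup_le (hF.image f) (by rintro _ ⟨p, hp, rfl⟩; exact h p hp)

lemma sSup_image_le_sSup_image_add {α : Type*} {F : Set α} (hF : F.Nonempty)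
    {f g : α → ℝ} {c : ℝ} (hbdd : BddAbove (f '' F)) (h : ∀ p ∈ F, g p ≤ f p + c) :
    sSup (g '' F) ≤ sSup (f '' F) + c := by
  apply csSup_le (hF.image g)
  rintro _ ⟨p, hp, rfl⟩
  have := le_csSup hbdd (Set.mem_image_of_mem f hp)
  linarith [h p hp]

lemma combo_sSup_le {S1 S2 : Set ℝ} (h1 : S1.Nonempty) (h2 : S2.Nonempty)
    {a b c : ℝ} (ha : 0 ≤ a) (hb : 0 ≤ b)
    (h : ∀ x ∈ S1, ∀ y ∈ S2, a * x + b * y ≤ c) :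
    a * sSup S1 + b * sSup S2 ≤ c := by
  rcases eq_or_lt_of_le ha with rfl | ha'
  · simp only [zero_mul, zero_add]
    obtain ⟨x, hx⟩ := h1
    rcases eq_or_lt_of_le hb with rfl | hb'
    · obtain ⟨y, hy⟩ := h2
      simpa using h x hx y hy
    · have : sSup S2 ≤ c / b := by
        apply csSup_le h2
        intro y hy
        rw [le_div_iff₀ hb']
        have := h x hx y hy
        linarith
      calc b * sSup S2 ≤ b * (c / b) := by nlinarith
        _ = c := by field_simp
  · have key : ∀ x ∈ S1, b * sSup S2 ≤ c - a * x := by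
      intro x hx
      rcases eq_or_lt_of_le hb with rfl | hb'
      · obtain ⟨y, hy⟩ := h2
        have := h x hx y hy; simpa using by linarith
      · have : sSup S2 ≤ (c - a * x) / b := by
          apply csSup_le h2
          intro y hy
          rw [le_div_iff₀ hb']
          have := h x hx y hy
          linarith
        calc b * sSup S2 ≤ b * ((c - a * x) / b) := by nlinarith
          _ = c - a * x := by field_simp
    obtain ⟨y0, hy0⟩ := h2
    have : sSup S1 ≤ (c - b * sSup S2) / a := by
      apply csSup_le h1
      intro x hx
      rw [le_div_iff₀ ha']
      linarith [key x hx]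
    calc a * sSup S1 + b * sSup S2 ≤ a * ((c - b * sSup S2) / a) + b * sSup S2 := by nlinarith
      _ = c := by field_simp; ring

end SupLemmas
namespace EVModel

variable {K T : ℕ} {Ω : Type} [MeasurableSpace Ω]

lemma feas_nonempty (M : EVModel K T Ω) {y : ℝ} (hy : 0 ≤ y) :
    (M.feas y).Nonempty :=
  ⟨(0, fun _ => 0), ⟨⟨le_refl 0, le_min M.vbar_pos.le hy⟩,
    fun i => ⟨le_refl 0, (M.dbar_pos i).le⟩⟩⟩

lemma feas_combo (M : EVModel K T Ω) {y1 y2 a b : ℝ} {p1 p2 : ℝ × (Fin K → ℝ)}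
    (hp1 : p1 ∈ M.feas y1) (hp2 : p2 ∈ M.feas y2)
    (ha : 0 ≤ a) (hb : 0 ≤ b) (hab : a + b = 1) :
    (a * p1.1 + b * p2.1, fun i => a * p1.2 i + b * p2.2 i) ∈ M.feas (a * y1 + b * y2) := by
  obtain ⟨⟨h10, h1m⟩, h1d⟩ := hp1
  obtain ⟨⟨h20, h2m⟩, h2d⟩ := hp2
  have h1v := le_min_iff.1 h1m
  have h2v := le_min_iff.1 h2m
  refine ⟨⟨?_, le_min ?_ ?_⟩, fun i => ⟨?_, ?_⟩⟩
  · show (0:ℝ) ≤ a * p1.1 + b * p2.1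
    positivity
  · show a * p1.1 + b * p2.1 ≤ M.vbar
    have e1 : a * M.vbar + b * M.vbar = M.vbar := by rw [← add_mul, hab, one_mul]
    nlinarith [mul_le_mul_of_nonneg_left h1v.1 ha, mul_le_mul_of_nonneg_left h2v.1 hb]
  · show a * p1.1 + b * p2.1 ≤ a * y1 + b * y2
    nlinarith [mul_le_mul_of_nonneg_left h1v.2 ha, mul_le_mul_of_nonneg_left h2v.2 hb]
  · show (0:ℝ) ≤ a * p1.2 i + b * p2.2 i
    have := (h1d i).1; have := (h2d i).1; positivity
  · show a * p1.2 i + b * p2.2 i ≤ M.dbar i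
    have e1 : a * M.dbar i + b * M.dbar i = M.dbar i := by rw [← add_mul, hab, one_mul]
    nlinarith [mul_le_mul_of_nonneg_left (h1d i).2 ha, mul_le_mul_of_nonneg_left (h2d i).2 hb]

lemma sup_facts (M : EVModel K T Ω) (t' : ℕ) (ht' : t' < T)
    (G : ℝ → ℝ) (CG : ℝ) (hGb : ∀ y', 0 ≤ y' → G y' ≤ CG)
    (hGconc : ConcaveOn ℝ (Ici 0) G)
    (Φ : ℝ → ℝ → ℝ)
    (hΦ : ∀ y rt, Φ y rt = sSup ((fun p : ℝ × (Fin K → ℝ) =>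
      M.stage t' rt p.1 p.2 + G (y - p.1)) '' M.feas y)) :
    (∀ y rt, 0 ≤ y → Φ y rt ≤ (∑ i, M.U i (M.dbar i)) + CG + M.γ * max rt 0) ∧
    (∀ y a b, 0 ≤ y → a ≤ b → Φ y a ≤ Φ y b ∧ Φ y b ≤ Φ y a + M.γ * (b - a)) ∧
    (∀ rt, ConcaveOn ℝ (Ici 0) (fun y => Φ y rt)) ∧
    (∀ y s, 0 ≤ y → Integrable (fun ω => Φ y (M.r s ω)) M.μ) := by
  obtain ⟨hpm, hpmpp, hppγ⟩ := M.A1 t' ht'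
  have hγ : 0 < M.γ := lt_trans (lt_of_lt_of_le hpm hpmpp) hppγ
  have hpp : 0 < M.pip t' := lt_of_lt_of_le hpm hpmpp
  -- pointwise upper bound on the objective
  have hobj_le : ∀ y rt, 0 ≤ y → ∀ p ∈ M.feas y,
      M.stage t' rt p.1 p.2 + G (y - p.1) ≤
        (∑ i, M.U i (M.dbar i)) + CG + M.γ * max rt 0 := by
    intro y rt hy p hp
    obtain ⟨⟨h0, hm⟩, hd⟩ := hp
    have hv := le_min_iff.1 hm
    have hsum0 : 0 ≤ ∑ i, p.2 i := Finset.sum_nonneg fun i _ => (hd i).1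
    have hU : ∑ i, M.U i (p.2 i) ≤ ∑ i, M.U i (M.dbar i) := by
      apply Finset.sum_le_sum
      intro i _
      exact (M.U_strictMono i).monotoneOn (hd i) ⟨(M.dbar_pos i).le, le_refl _⟩ (hd i).2
    have hnem : -(NEMPayment (M.pip t') (M.pim t') (p.1 + ∑ i, p.2 i - rt)) ≤ M.γ * max rt 0 := by
      have h1 := nem_ge hpmpp (p.1 + ∑ i, p.2 i - rt)
      rcases le_total 0 rt with h3 | h3
      · rw [max_eq_left h3]; nlinarith
      · rw [max_eq_right h3]; nlinarith
    have hG : G (y - p.1) ≤ CG := hGb _ (by linarith [hv.2])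
    simp only [stage]
    linarith
  have hbdd : ∀ y rt, BddAbove ((fun p : ℝ × (Fin K → ℝ) =>
      M.stage t' rt p.1 p.2 + G (y - p.1)) '' M.feas y) := by
    intro y rt
    rcases le_or_gt 0 y with hy | hy
    · exact ⟨_, by rintro _ ⟨p, hp, rfl⟩; exact hobj_le y rt hy p hp⟩
    · have hemp : M.feas y = ∅ := Set.eq_empty_iff_forall_notMem.2 (fun p hp => by
        have h1 := hp.1.1
        have h2 := (le_min_iff.1 hp.1.2).2
        linarith)
      rw [hemp, Set.image_empty]
      exact bddAbove_empty
  -- (i)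
  have fact1 : ∀ y rt, 0 ≤ y → Φ y rt ≤ (∑ i, M.U i (M.dbar i)) + CG + M.γ * max rt 0 := by
    intro y rt hy
    rw [hΦ]
    exact sSup_image_le (M.feas_nonempty hy) (hobj_le y rt hy)
  -- (ii)
  have fact2 : ∀ y a b, 0 ≤ y → a ≤ b →
      Φ y a ≤ Φ y b ∧ Φ y b ≤ Φ y a + M.γ * (b - a) := by
    intro y a b hy hab
    constructor
    · rw [hΦ, hΦ]
      have := sSup_image_le_sSup_image_add (M.feas_nonempty hy) (hbdd y b) (c := 0)
        (g := fun p : ℝ × (Fin K → ℝ) => M.stage t' a p.1 p.2 + G (y - p.1)) ?_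
      · simpa using this
      · intro p _
        have : NEMPayment (M.pip t') (M.pim t') (p.1 + ∑ i, p.2 i - b) ≤
            NEMPayment (M.pip t') (M.pim t') (p.1 + ∑ i, p.2 i - a) :=
          nem_mono hpm.le hpmpp (by linarith)
        simp only [stage]
        linarith
    · rw [hΦ, hΦ]
      apply sSup_image_le_sSup_image_add (M.feas_nonempty hy) (hbdd y a)
      intro p _
      have h1 : NEMPayment (M.pip t') (M.pim t') (p.1 + ∑ i, p.2 i - a) ≤
          NEMPayment (M.pip t') (M.pim t') (p.1 + ∑ i, p.2 i - b) +
            M.pip t' * ((p.1 + ∑ i, p.2 i - a) - (p.1 + ∑ i, p.2 i - b)) :=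
        nem_lip hpm.le hpmpp (by linarith)
      have h2 : M.pip t' * (b - a) ≤ M.γ * (b - a) := by nlinarith
      simp only [stage]
      have h3 : (p.1 + ∑ i, p.2 i - a) - (p.1 + ∑ i, p.2 i - b) = b - a := by ring
      rw [h3] at h1
      linarith
  -- (iii)
  have fact3 : ∀ rt, ConcaveOn ℝ (Ici 0) (fun y => Φ y rt) := by
    intro rt
    refine ⟨convex_Ici 0, ?_⟩
    intro y1 hy1 y2 hy2 a b ha hb hab
    simp only [smul_eq_mul]
    rw [hΦ, hΦ, hΦ]
    apply combo_sSup_le ((M.feas_nonempty hy1).image _) ((M.feas_nonempty hy2).image _) ha hb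
    rintro _ ⟨p1, hp1, rfl⟩ _ ⟨p2, hp2, rfl⟩
    have hpc := M.feas_combo hp1 hp2 ha hb hab
    refine le_trans ?_ (le_csSup (hbdd _ rt) (Set.mem_image_of_mem _ hpc))
    simp only [stage]
    have hd1 := hp1.2
    have hd2 := hp2.2
    have hU : ∀ i, a * M.U i (p1.2 i) + b * M.U i (p2.2 i) ≤
        M.U i (a * p1.2 i + b * p2.2 i) := by
      intro i
      have := ((M.U_strictConcave i).concaveOn).2 (hd1 i) (hd2 i) ha hb hab
      simpa [smul_eq_mul] using this
    have hUsum : a * ∑ i, M.U i (p1.2 i) + b * ∑ i, M.U i (p2.2 i) ≤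
        ∑ i, M.U i (a * p1.2 i + b * p2.2 i) := by
      rw [Finset.mul_sum, Finset.mul_sum, ← Finset.sum_add_distrib]
      exact Finset.sum_le_sum fun i _ => hU i
    have hsum_eq : ∑ i, (a * p1.2 i + b * p2.2 i) = a * ∑ i, p1.2 i + b * ∑ i, p2.2 i := by
      rw [Finset.sum_add_distrib, Finset.mul_sum, Finset.mul_sum]
    have hz : (a * p1.1 + b * p2.1) + ∑ i, (a * p1.2 i + b * p2.2 i) - rt =
        a * (p1.1 + ∑ i, p1.2 i - rt) + b * (p2.1 + ∑ i, p2.2 i - rt) := by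
      rw [hsum_eq]; linear_combination rt * hab
    have hnem : NEMPayment (M.pip t') (M.pim t')
        ((a * p1.1 + b * p2.1) + ∑ i, (a * p1.2 i + b * p2.2 i) - rt) ≤
        a * NEMPayment (M.pip t') (M.pim t') (p1.1 + ∑ i, p1.2 i - rt) +
        b * NEMPayment (M.pip t') (M.pim t') (p2.1 + ∑ i, p2.2 i - rt) := by
      rw [hz]
      exact nem_convex hpmpp ha hb hab
    have hy1v : 0 ≤ y1 - p1.1 := by linarith [(le_min_iff.1 hp1.1.2).2]
    have hy2v : 0 ≤ y2 - p2.1 := by linarith [(le_min_iff.1 hp2.1.2).2]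
    have hG : a * G (y1 - p1.1) + b * G (y2 - p2.1) ≤
        G ((a * y1 + b * y2) - (a * p1.1 + b * p2.1)) := by
      have := hGconc.2 (mem_Ici.2 hy1v) (mem_Ici.2 hy2v) ha hb hab
      simp only [smul_eq_mul] at this
      have heq : a * (y1 - p1.1) + b * (y2 - p2.1) =
          (a * y1 + b * y2) - (a * p1.1 + b * p2.1) := by ring
      rwa [heq] at this
    linarith
  -- (iv)
  have fact4 : ∀ y s, 0 ≤ y → Integrable (fun ω => Φ y (M.r s ω)) M.μ := by
    haveI : IsProbabilityMeasure M.μ := M.prob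
    intro y s hy
    have hlipkey : ∀ a b : ℝ, a ≤ b → |Φ y a - Φ y b| ≤ M.γ * (b - a) := by
      intro a b hab
      obtain ⟨h1, h2⟩ := fact2 y a b hy hab
      rw [abs_le]
      constructor <;> linarith
    have hlip : LipschitzWith (Real.toNNReal M.γ) (Φ y) := by
      apply LipschitzWith.of_dist_le_mul
      intro a b
      rw [Real.dist_eq, Real.dist_eq, Real.coe_toNNReal _ hγ.le]
      rcases le_total a b with hab | hab
      · have h := hlipkey a b hab
        have e : |a - b| = b - a := by rw [abs_of_nonpos (by linarith)]; ring
        rw [e]; exact h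
      · have h := hlipkey b a hab
        have e : |a - b| = a - b := abs_of_nonneg (by linarith)
        rw [e, abs_sub_comm]; exact h
    have hmeas : Measurable (fun ω => Φ y (M.r s ω)) :=
      hlip.continuous.measurable.comp (M.r_meas s)
    apply Integrable.mono' ((integrable_const |Φ y 0|).add ((M.r_int s).const_mul M.γ))
      hmeas.aestronglyMeasurable
    apply Filter.Eventually.of_forall
    intro ω
    have h0 : 0 ≤ M.r s ω := M.r_nonneg s ω
    have := hlipkey 0 (M.r s ω) h0
    rw [abs_sub_comm] at this
    calc |Φ y (M.r s ω)| ≤ |Φ y 0| + |Φ y (M.r s ω) - Φ y 0| := by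
          have h := abs_add_le (Φ y 0) (Φ y (M.r s ω) - Φ y 0)
          have e : Φ y 0 + (Φ y (M.r s ω) - Φ y 0) = Φ y (M.r s ω) := by ring
          rw [e] at h
          linarith
      _ ≤ |Φ y 0| + M.γ * (M.r s ω - 0) := by linarith
      _ = |Φ y 0| + M.γ * M.r s ω := by ring
  exact ⟨fact1, fact2, fact3, fact4⟩

end EVModel
namespace EVModel

variable {K T : ℕ} {Ω : Type} [MeasurableSpace Ω]

/-- Recursive upper bound for the value functions. -/
noncomputable def Cb (M : EVModel K T Ω) : ℕ → ℝ
  | 0 => (∑ i, M.U i (M.dbar i)) + M.γ * M.vbar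
  | (k + 1) => (∑ i, M.U i (M.dbar i)) +
      (M.Cb k + M.γ * ∫ ω, M.r (T - 1 - k) ω ∂M.μ) + 0

theorem Wfacts (M : EVModel K T Ω) (hT : 0 < T) (k : ℕ) :
    (∀ y rt, 0 ≤ y → M.W k y rt ≤ M.Cb k + M.γ * max rt 0) ∧
    (∀ y a b, 0 ≤ y → a ≤ b → M.W k y a ≤ M.W k y b ∧ M.W k y b ≤ M.W k y a + M.γ * (b - a)) ∧
    (∀ rt, ConcaveOn ℝ (Ici 0) (fun y => M.W k y rt)) ∧
    (∀ y s, 0 ≤ y → Integrable (fun ω => M.W k y (M.r s ω)) M.μ) := by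
  have hγ : 0 < M.γ := by
    obtain ⟨h1, h2, h3⟩ := M.A1 0 hT
    linarith
  induction k with
  | zero =>
    have hG : ∀ y', 0 ≤ y' → -(M.γ * y') ≤ M.γ * M.vbar := by
      intro y' hy'
      nlinarith [M.vbar_pos]
    have hGconc : ConcaveOn ℝ (Ici 0) (fun y' => -(M.γ * y')) := by
      refine ⟨convex_Ici 0, ?_⟩
      intro x _ y _ a b _ _ hab
      simp only [smul_eq_mul]
      exact le_of_eq (by ring)
    have key := M.sup_facts (T - 1) (by omega) (fun y' => -(M.γ * y')) (M.γ * M.vbar)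
        hG hGconc (M.W 0) ?_
    · obtain ⟨f1, f2, f3, f4⟩ := key
      refine ⟨?_, f2, f3, f4⟩
      intro y rt hy
      have := f1 y rt hy
      simp only [Cb]
      linarith
    · intro y rt
      simp only [W]
      congr 1
  | succ k ih =>
    obtain ⟨ih1, ih2, ih3, ih4⟩ := ih
    haveI : IsProbabilityMeasure M.μ := M.prob
    set s := T - 1 - k with hs
    set G : ℝ → ℝ := fun y' => ∫ ω, M.W k y' (M.r s ω) ∂M.μ with hGdef
    have hint : ∀ y', 0 ≤ y' → Integrable (fun ω => M.W k y' (M.r s ω)) M.μ :=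
      fun y' hy' => ih4 y' s hy'
    have hrint : Integrable (fun ω => M.Cb k + M.γ * M.r s ω) M.μ :=
      (integrable_const _).add ((M.r_int s).const_mul M.γ)
    have hGb : ∀ y', 0 ≤ y' → G y' ≤ M.Cb k + M.γ * ∫ ω, M.r s ω ∂M.μ := by
      intro y' hy'
      have hle : ∀ ω, M.W k y' (M.r s ω) ≤ M.Cb k + M.γ * M.r s ω := by
        intro ω
        have := ih1 y' (M.r s ω) hy'
        rwa [max_eq_left (M.r_nonneg s ω)] at this
      calc G y' ≤ ∫ ω, (M.Cb k + M.γ * M.r s ω) ∂M.μ :=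
            integral_mono (hint y' hy') hrint hle
        _ = M.Cb k + M.γ * ∫ ω, M.r s ω ∂M.μ := by
            rw [integral_add (integrable_const _) ((M.r_int s).const_mul M.γ),
              integral_const, integral_const_mul]
            simp
    have hGconc : ConcaveOn ℝ (Ici 0) G := by
      refine ⟨convex_Ici 0, ?_⟩
      intro y1 hy1 y2 hy2 a b ha hb hab
      simp only [smul_eq_mul, hGdef]
      have h1 := hint y1 hy1
      have h2 := hint y2 hy2
      have hsum : a * ∫ ω, M.W k y1 (M.r s ω) ∂M.μ + b * ∫ ω, M.W k y2 (M.r s ω) ∂M.μ =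
          ∫ ω, (a * M.W k y1 (M.r s ω) + b * M.W k y2 (M.r s ω)) ∂M.μ := by
        rw [integral_add (h1.const_mul a) (h2.const_mul b), integral_const_mul,
          integral_const_mul]
      rw [hsum]
      apply integral_mono ((h1.const_mul a).add (h2.const_mul b))
        (hint _ (by have h1 := mem_Ici.1 hy1; have h2 := mem_Ici.1 hy2; positivity))
      intro ω
      have := (ih3 (M.r s ω)).2 hy1 hy2 ha hb hab
      simpa [smul_eq_mul] using this
    have key := M.sup_facts (T - 2 - k) (by omega) G (M.Cb k + M.γ * ∫ ω, M.r s ω ∂M.μ)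
        hGb hGconc (M.W (k + 1)) ?_
    · obtain ⟨f1, f2, f3, f4⟩ := key
      refine ⟨?_, f2, f3, f4⟩
      intro y rt hy
      have := f1 y rt hy
      simp only [Cb]
      linarith
    · intro y rt
      simp only [W]
      rfl
    
end EVModel
namespace EVModel

variable {K T : ℕ} {Ω : Type} [MeasurableSpace Ω]

lemma Vbar_concave (M : EVModel K T Ω) (hT : 0 < T) (t : ℕ) :
    ConcaveOn ℝ (Ici 0) (M.Vbar t) := by
  obtain ⟨-, -, ih3, ih4⟩ := M.Wfacts hT (T - 1 - t)
  refine ⟨convex_Ici 0, ?_⟩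
  intro y1 hy1 y2 hy2 a b ha hb hab
  simp only [smul_eq_mul, Vbar, V]
  have h1 := ih4 y1 t (mem_Ici.1 hy1)
  have h2 := ih4 y2 t (mem_Ici.1 hy2)
  have hsum : a * (∫ ω, M.W (T - 1 - t) y1 (M.r t ω) ∂M.μ) +
      b * (∫ ω, M.W (T - 1 - t) y2 (M.r t ω) ∂M.μ) =
      ∫ ω, (a * M.W (T - 1 - t) y1 (M.r t ω) + b * M.W (T - 1 - t) y2 (M.r t ω)) ∂M.μ := by
    rw [integral_add (h1.const_mul a) (h2.const_mul b), integral_const_mul, integral_const_mul]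
  rw [hsum]
  apply integral_mono ((h1.const_mul a).add (h2.const_mul b))
    (ih4 _ t (by have e1 := mem_Ici.1 hy1; have e2 := mem_Ici.1 hy2; positivity))
  intro ω
  have := (ih3 (M.r t ω)).2 hy1 hy2 ha hb hab
  simpa [smul_eq_mul] using this

end EVModel

/-- **Theorem 1, net production zone.**
Let `δ_t ∈ [0, (T - t - 1) v̄]` satisfy `-π_t⁻ ∈ h_{t+1}(δ_t)`.  Then
`d*_i = l_i(π_t⁻)` together with `v* = min {v̄, max {y_t - δ_t, 0}}` is optimal for the
Bellman equation at time `t` whenever `v* + ∑ i d*_i < r_t`; equivalently `(v*, d*)`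
solves the convex program `P⁻` (maximize over `v + ∑ d ≤ r_t`) with the
net-production constraint inactive. -/
theorem thm1_net_production_zone (K T : ℕ) (Ω : Type) [MeasurableSpace Ω]
    (M : EVModel K T Ω)
    -- `L i` is the marginal utility `U_i'` on `[0, d̄_i]`
    (L : Fin K → ℝ → ℝ)
    (hL : ∀ i, ∀ x ∈ Set.Icc 0 (M.dbar i),
      HasDerivWithinAt (M.U i) (L i x) (Set.Icc 0 (M.dbar i)) x)
    (hLcont : ∀ i, ContinuousOn (L i) (Set.Icc 0 (M.dbar i)))
    -- `l i π = max {0, min {d̄_i, L_i⁻¹(π)}}`, characterized by clipping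
    (l : Fin K → ℝ → ℝ)
    (hl_mem : ∀ i π, l i π ∈ Set.Icc 0 (M.dbar i))
    (hl_hi : ∀ i π, π ≤ L i (M.dbar i) → l i π = M.dbar i)
    (hl_lo : ∀ i π, L i 0 ≤ π → l i π = 0)
    (hl_mid : ∀ i π, L i (M.dbar i) < π → π < L i 0 → L i (l i π) = π)
    (t : ℕ) (ht : t < T - 1) (y : ℝ) (hy : 0 ≤ y) (rt : ℝ) (hrt : 0 ≤ rt)
    (δ : ℝ) (hδ : δ ∈ Set.Icc 0 (((T - t - 1 : ℕ) : ℝ) * M.vbar))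
    (hδh : -M.pim t ∈ M.h (t + 1) δ)
    -- the net-production zone condition: `v* + ∑ i d*_i < r_t`
    (hzone : min M.vbar (max (y - δ) 0) + (∑ i, l i (M.pim t)) < rt) :
    M.IsBellmanOpt t y rt (min M.vbar (max (y - δ) 0), fun i => l i (M.pim t)) ∧
      IsMaxOn
        (fun p : ℝ × (Fin K → ℝ) =>
          ∑ i, M.U i (p.2 i) - M.pim t * (p.1 + ∑ i, p.2 i - rt) + M.Vbar (t + 1) (y - p.1))
        {p | p ∈ M.feas y ∧ p.1 + ∑ i, p.2 i ≤ rt}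
        (min M.vbar (max (y - δ) 0), fun i => l i (M.pim t)) := by
  have hT : 0 < T := by omega
  have htT : t < T := by omega
  have hne : ¬ (t = T - 1) := by omega
  obtain ⟨hpm, hpmpp, hppγ⟩ := M.A1 t htT
  set v' : ℝ := min M.vbar (max (y - δ) 0) with hv'def
  set d' : Fin K → ℝ := fun i => l i (M.pim t) with hd'def
  have hv'0 : 0 ≤ v' := le_min M.vbar_pos.le (le_max_right _ _)
  have hv'y : v' ≤ y := (min_le_right _ _).trans (max_le (by linarith [hδ.1]) hy)
  have hfeas : (v', d') ∈ M.feas y :=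
    ⟨⟨hv'0, le_min (min_le_left _ _) hv'y⟩, fun i => hl_mem i (M.pim t)⟩
  have hVb : ConcaveOn ℝ (Set.Ici 0) (M.Vbar (t + 1)) := M.Vbar_concave hT (t + 1)
  have hsg : ∀ z, 0 ≤ z →
      M.Vbar (t + 1) z ≤ M.Vbar (t + 1) δ + -M.pim t * (z - δ) := hδh
  -- the separable d-part
  have h3a : ∀ i, ∀ x ∈ Set.Icc (0:ℝ) (M.dbar i),
      M.U i x - M.pim t * x ≤ M.U i (d' i) - M.pim t * (d' i) := by
    intro i x hx
    have hconcU := (M.U_strictConcave i).concaveOn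
    have hd'mem : d' i ∈ Set.Icc (0:ℝ) (M.dbar i) := hl_mem i (M.pim t)
    have hkey : M.U i x ≤ M.U i (d' i) + L i (d' i) * (x - d' i) := by
      rcases lt_trichotomy x (d' i) with h | h | h
      · have hs := hconcU.le_slope_of_hasDerivWithinAt hx hd'mem h (hL i (d' i) hd'mem)
        rw [slope_def_field] at hs
        have hpos : (0:ℝ) < d' i - x := by linarith
        rw [le_div_iff₀ hpos] at hs
        nlinarith
      · rw [h]; simp
      · have hs := hconcU.slope_le_of_hasDerivWithinAt hd'mem hx h (hL i (d' i) hd'mem)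
        rw [slope_def_field] at hs
        have hpos : (0:ℝ) < x - d' i := by linarith
        rw [div_le_iff₀ hpos] at hs
        linarith
    have hcmp : (L i (d' i) - M.pim t) * (x - d' i) ≤ 0 := by
      rcases le_or_gt (M.pim t) (L i (M.dbar i)) with hc | hc
      · have hdd : d' i = M.dbar i := hl_hi i (M.pim t) hc
        have h1 : x - d' i ≤ 0 := by rw [hdd]; linarith [hx.2]
        have h2 : 0 ≤ L i (d' i) - M.pim t := by rw [hdd]; linarith
        exact mul_nonpos_of_nonneg_of_nonpos h2 h1
      · rcases le_or_gt (L i 0) (M.pim t) with hc2 | hc2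
        · have hdd : d' i = 0 := hl_lo i (M.pim t) hc2
          have h1 : 0 ≤ x - d' i := by rw [hdd]; linarith [hx.1]
          have h2 : L i (d' i) - M.pim t ≤ 0 := by rw [hdd]; linarith
          exact mul_nonpos_of_nonpos_of_nonneg h2 h1
        · have hdd : L i (d' i) = M.pim t := by
            have := hl_mid i (M.pim t) hc hc2
            rw [hd'def]
            exact this
          rw [hdd]
          simp
    nlinarith [hkey, hcmp]
  -- the separable v-part
  have h3b : ∀ v ∈ Set.Icc (0:ℝ) (min M.vbar y),
      -M.pim t * v + M.Vbar (t + 1) (y - v) ≤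
        -M.pim t * v' + M.Vbar (t + 1) (y - v') := by
    intro v hv
    have hvy : v ≤ y := hv.2.trans (min_le_right _ _)
    have hyv0 : (0:ℝ) ≤ y - v := by linarith
    rcases le_or_gt (max (y - δ) 0) M.vbar with hc | hc
    · have hv'eq : v' = max (y - δ) 0 := min_eq_right hc
      rcases le_or_gt 0 (y - δ) with h1 | h1
      · have hveq : v' = y - δ := by rw [hv'eq, max_eq_left h1]
        have hyδ : y - v' = δ := by rw [hveq]; ring
        have hs := hsg (y - v) hyv0
        rw [hyδ, hveq]
        nlinarith
      · have hveq : v' = 0 := by rw [hv'eq, max_eq_right h1.le]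
        rw [hveq]
        rcases eq_or_lt_of_le hv.1 with h0 | h0
        · rw [← h0]
        · have hyδ : y < δ := by linarith
          have hslope := hVb.slope_anti_adjacent (Set.mem_Ici.2 hyv0) (Set.mem_Ici.2 hδ.1)
            (show y - v < y by linarith) hyδ
          have hs := hsg y hy
          have hd1 : (0:ℝ) < δ - y := by linarith
          have hd2 : (0:ℝ) < y - (y - v) := by linarith
          have hA : -M.pim t ≤ (M.Vbar (t + 1) δ - M.Vbar (t + 1) y) / (δ - y) := by
            rw [le_div_iff₀ hd1]; nlinarith
          have hB := hA.trans hslope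
          rw [le_div_iff₀ hd2] at hB
          rw [sub_zero]
          linarith
    · have hmax : M.vbar < y - δ := by
        rcases max_cases (y - δ) (0:ℝ) with ⟨he, _⟩ | ⟨he, _⟩
        · rwa [he] at hc
        · rw [he] at hc; exact absurd hc (not_lt.2 M.vbar_pos.le)
      have hveq : v' = M.vbar := min_eq_left hc.le
      have hvvb : v ≤ M.vbar := hv.2.trans (min_le_left _ _)
      rw [hveq]
      rcases eq_or_lt_of_le hvvb with h0 | h0
      · rw [h0]
      · have hδlt : δ < y - M.vbar := by linarith
        have hlt2 : y - M.vbar < y - v := by linarith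
        have hslope := hVb.slope_anti_adjacent (Set.mem_Ici.2 hδ.1) (Set.mem_Ici.2 hyv0)
          hδlt hlt2
        have hs := hsg (y - M.vbar) (by linarith [hδ.1])
        have hd1 : (0:ℝ) < (y - v) - (y - M.vbar) := by linarith
        have hd2 : (0:ℝ) < (y - M.vbar) - δ := by linarith
        have hA : (M.Vbar (t + 1) (y - M.vbar) - M.Vbar (t + 1) δ) / ((y - M.vbar) - δ) ≤
            -M.pim t := by
          rw [div_le_iff₀ hd2]; nlinarith
        have hB := hslope.trans hA
        rw [div_le_iff₀ hd1] at hB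
        nlinarith
  -- max of the linear program objective
  have hda : ∀ q ∈ M.feas y, ∑ i, M.U i (q.2 i) - M.pim t * ∑ i, q.2 i ≤
      ∑ i, M.U i (d' i) - M.pim t * ∑ i, d' i := by
    intro q hq
    rw [Finset.mul_sum, Finset.mul_sum, ← Finset.sum_sub_distrib, ← Finset.sum_sub_distrib]
    exact Finset.sum_le_sum fun i _ => h3a i (q.2 i) (hq.2 i)
  have hFmax : ∀ q ∈ M.feas y,
      ∑ i, M.U i (q.2 i) - M.pim t * (q.1 + ∑ i, q.2 i - rt) + M.Vbar (t + 1) (y - q.1) ≤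
      ∑ i, M.U i (d' i) - M.pim t * (v' + ∑ i, d' i - rt) + M.Vbar (t + 1) (y - v') := by
    intro q hq
    have h1 := hda q hq
    have h2 := h3b q.1 hq.1
    linarith
  -- relating Bellman objective to the linear objective
  have hbell : ∀ q : ℝ × (Fin K → ℝ), M.bellObj t y rt q =
      M.stage t rt q.1 q.2 + M.Vbar (t + 1) (y - q.1) := by
    intro q
    simp only [EVModel.bellObj, if_neg hne]
    rfl
  have hle : ∀ q ∈ M.feas y, M.bellObj t y rt q ≤
      ∑ i, M.U i (q.2 i) - M.pim t * (q.1 + ∑ i, q.2 i - rt) + M.Vbar (t + 1) (y - q.1) := by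
    intro q hq
    rw [hbell]
    simp only [EVModel.stage]
    have := nem_ge hpmpp (q.1 + ∑ i, q.2 i - rt)
    linarith
  have hz' : v' + ∑ i, d' i - rt ≤ 0 := by
    have := hzone
    linarith
  have heq : M.bellObj t y rt (v', d') =
      ∑ i, M.U i (d' i) - M.pim t * (v' + ∑ i, d' i - rt) + M.Vbar (t + 1) (y - v') := by
    rw [hbell]
    simp only [EVModel.stage]
    rw [nem_of_nonpos hz']
  constructor
  · refine ⟨hfeas, fun q hq => ?_⟩
    calc M.bellObj t y rt q ≤ _ := hle q hq
      _ ≤ _ := hFmax q hq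
      _ = M.bellObj t y rt (v', d') := heq.symm
  · rw [isMaxOn_iff]
    intro q hq
    have := hFmax q hq.1
    simpa using this
end

section
/- (Theorem 2, procrastination threshold under non-increasing purchase prices) Let t < T−1 and suppose the future purchase prices are non-increasing: π_{s+1}⁺ ≤ π_s⁺ for all s ∈ {t,…,T−2}. Then the procrastination threshold is maximal: −π_t⁺ ∈ h_{t+1}((T−t−1)·v̄), i.e., one may take τ_t = (T−t−1)·v̄, so that in the net consumption zone the optimal EV charging is v* = min{v̄, max{y_t − (T−t−1)·v̄, 0}} (the prosumer defers charging as long as the remaining demand can still be fulfilled in the remaining periods). -/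
open MeasureTheory Set

/- ############ Auxiliary development for Theorem 2 ############ -/

section NEMAux

lemma NEM_add_le {pp pm : ℝ} (hppm : pm ≤ pp) (a : ℝ) {e : ℝ} (he : 0 ≤ e) :
    NEMPayment pp pm (a + e) ≤ NEMPayment pp pm a + pp * e := by
  unfold NEMPayment
  rcases le_total a 0 with ha | ha <;> rcases le_total (a + e) 0 with hae | hae
  · rw [max_eq_right hae, max_eq_right ha, max_eq_left (by linarith : (0:ℝ) ≤ -(a+e)),
      max_eq_left (by linarith : (0:ℝ) ≤ -a)]
    nlinarith
  · rw [max_eq_left hae, max_eq_right ha, max_eq_right (by linarith : -(a+e) ≤ (0:ℝ)),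
      max_eq_left (by linarith : (0:ℝ) ≤ -a)]
    nlinarith
  · rw [max_eq_right hae, max_eq_left ha, max_eq_left (by linarith : (0:ℝ) ≤ -(a+e)),
      max_eq_right (by linarith : -a ≤ (0:ℝ))]
    nlinarith
  · rw [max_eq_left hae, max_eq_left ha, max_eq_right (by linarith : -(a+e) ≤ (0:ℝ)),
      max_eq_right (by linarith : -a ≤ (0:ℝ))]
    nlinarith

lemma NEM_ge_lin {pp pm : ℝ} (hpm : 0 ≤ pm) (hppm : pm ≤ pp) (z : ℝ) :
    pm * z ≤ NEMPayment pp pm z := by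
  unfold NEMPayment
  rcases le_total z 0 with hz | hz
  · rw [max_eq_right hz, max_eq_left (by linarith)]; nlinarith
  · rw [max_eq_left hz, max_eq_right (by linarith)]; nlinarith

lemma NEM_mono {pp pm : ℝ} (hpm : 0 ≤ pm) (hpp : 0 ≤ pp) {a b : ℝ} (hab : a ≤ b) :
    NEMPayment pp pm a ≤ NEMPayment pp pm b := by
  unfold NEMPayment
  have h1 : max a 0 ≤ max b 0 := max_le_max hab le_rfl
  have h2 : max (-b) 0 ≤ max (-a) 0 := max_le_max (by linarith) le_rfl
  nlinarith

lemma sSup_image_le' {α β : Type*} (f : α → ℝ) (g : β → ℝ) (s : Set α) (u : Set β) (c : ℝ)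
    (hs : s.Nonempty) (hg : BddAbove (g '' u))
    (h : ∀ p ∈ s, ∃ q ∈ u, f p ≤ g q + c) :
    sSup (f '' s) ≤ sSup (g '' u) + c := by
  refine csSup_le (hs.image f) ?_
  rintro a ⟨p, hp, rfl⟩
  obtain ⟨q, hq, hfq⟩ := h p hp
  exact hfq.trans (by gcongr; exact le_csSup hg (Set.mem_image_of_mem g hq))

lemma sSup_image_shift' {α : Type*} (f g : α → ℝ) (s : Set α) (c : ℝ)
    (hs : s.Nonempty) (hf : BddAbove (f '' s)) (hg : BddAbove (g '' s))
    (h : ∀ p ∈ s, f p = g p + c) :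
    sSup (f '' s) = sSup (g '' s) + c := by
  have h1 : sSup (f '' s) ≤ sSup (g '' s) + c :=
    sSup_image_le' f g s s c hs hg (fun p hp => ⟨p, hp, (h p hp).le⟩)
  have h2 : sSup (g '' s) ≤ sSup (f '' s) + (-c) :=
    sSup_image_le' g f s s (-c) hs hf (fun p hp => ⟨p, hp, by rw [h p hp]; ring_nf; exact le_rfl⟩)
  linarith

lemma sSup_image_mono' {α : Type*} (f g : α → ℝ) (s : Set α)
    (hg : BddAbove (g '' s)) (h : ∀ p ∈ s, f p ≤ g p) :
    sSup (f '' s) ≤ sSup (g '' s) := by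
  rcases s.eq_empty_or_nonempty with rfl | hs
  · simp
  · refine csSup_le (hs.image f) ?_
    rintro a ⟨p, hp, rfl⟩
    exact (h p hp).trans (le_csSup hg (Set.mem_image_of_mem g hp))

end NEMAux

namespace EVModel

variable {K T : ℕ} {Ω : Type} [MeasurableSpace Ω]

/-- The objective of the `W` recursion. -/
noncomputable def obj (M : EVModel K T Ω) : ℕ → ℝ → ℝ → (ℝ × (Fin K → ℝ)) → ℝ
  | 0 => fun y rt p => M.stage (T - 1) rt p.1 p.2 - M.γ * (y - p.1)
  | (k + 1) => fun y rt p => M.stage (T - 2 - k) rt p.1 p.2 +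
      ∫ ω, M.W k (y - p.1) (M.r (T - 1 - k) ω) ∂M.μ

lemma W_eq (M : EVModel K T Ω) (k : ℕ) (y rt : ℝ) :
    M.W k y rt = sSup (M.obj k y rt '' M.feas y) := by cases k <;> rfl

noncomputable def pS (M : EVModel K T Ω) : ℝ := ∑ s ∈ Finset.range T, M.pip s
noncomputable def Umax (M : EVModel K T Ω) : ℝ := ∑ i, M.U i (M.dbar i)
noncomputable def RS (M : EVModel K T Ω) : ℝ := ∑ s ∈ Finset.range T, ∫ ω, M.r s ω ∂M.μ
noncomputable def Abnd (M : EVModel K T Ω) (k : ℕ) : ℝ := ((k : ℝ) + 1) * (M.Umax + M.pS * M.RS)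

variable (M : EVModel K T Ω)

lemma pip_pos {s : ℕ} (hs : s < T) : 0 < M.pip s :=
  lt_of_lt_of_le (M.A1 s hs).1 (M.A1 s hs).2.1

lemma pip_le_pS {s : ℕ} (hs : s < T) : M.pip s ≤ M.pS :=
  Finset.single_le_sum (fun i hi => (M.pip_pos (Finset.mem_range.mp hi)).le)
    (Finset.mem_range.mpr hs)

lemma pim_le_pS {s : ℕ} (hs : s < T) : M.pim s ≤ M.pS :=
  le_trans (M.A1 s hs).2.1 (M.pip_le_pS hs)

lemma pS_nonneg : 0 ≤ M.pS :=
  Finset.sum_nonneg (fun i hi => (M.pip_pos (Finset.mem_range.mp hi)).le)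

lemma RS_nonneg : 0 ≤ M.RS :=
  Finset.sum_nonneg (fun i _ => integral_nonneg (fun ω => M.r_nonneg i ω))

lemma int_r_le_RS {s : ℕ} (hs : s < T) : (∫ ω, M.r s ω ∂M.μ) ≤ M.RS :=
  Finset.single_le_sum (f := fun s => ∫ ω, M.r s ω ∂M.μ)
    (fun i _ => integral_nonneg (fun ω => M.r_nonneg i ω))
    (Finset.mem_range.mpr hs)

lemma U_le_Umax {d : Fin K → ℝ} (hd : ∀ i, d i ∈ Icc 0 (M.dbar i)) :
    ∑ i, M.U i (d i) ≤ M.Umax :=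
  Finset.sum_le_sum (fun i _ => (M.U_strictMono i).monotoneOn (hd i)
    ⟨(M.dbar_pos i).le, le_rfl⟩ (hd i).2)

lemma Umax_nonneg : 0 ≤ M.Umax := by
  refine Finset.sum_nonneg (fun i _ => ?_)
  have := (M.U_strictMono i) (show (0:ℝ) ∈ Icc 0 (M.dbar i) from ⟨le_rfl, (M.dbar_pos i).le⟩)
    ⟨(M.dbar_pos i).le, le_rfl⟩ (M.dbar_pos i)
  rw [M.U_zero i] at this
  exact this.le

lemma gamma_pos (hT : 0 < T) : 0 < M.γ :=
  lt_trans (M.pip_pos hT) (M.A1 0 hT).2.2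

lemma Abnd_nonneg (k : ℕ) : 0 ≤ M.Abnd k := by
  have h1 := M.Umax_nonneg
  have h2 := M.pS_nonneg
  have h3 := M.RS_nonneg
  unfold Abnd
  positivity

lemma stage_le {s : ℕ} (hs : s < T) (rt v : ℝ) {d : Fin K → ℝ}
    (hv : 0 ≤ v) (hd : ∀ i, d i ∈ Icc 0 (M.dbar i)) :
    M.stage s rt v d ≤ M.Umax + M.pim s * rt := by
  have h1 := M.U_le_Umax hd
  have h2 : 0 ≤ ∑ i, d i := Finset.sum_nonneg (fun i _ => (hd i).1)
  have h3 : M.pim s * (v + ∑ i, d i - rt) ≤ NEMPayment (M.pip s) (M.pim s) (v + ∑ i, d i - rt) :=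
    NEM_ge_lin (M.A1 s hs).1.le (M.A1 s hs).2.1 _
  have h4 : 0 ≤ M.pim s := (M.A1 s hs).1.le
  unfold stage
  nlinarith

lemma stage_zero {s : ℕ} (hs : s < T) {rt : ℝ} (hr : 0 ≤ rt) :
    M.stage s rt 0 (fun _ => 0) = M.pim s * rt := by
  unfold stage NEMPayment
  rw [max_eq_right (by simpa using hr), max_eq_left (by simpa using hr)]
  simp [M.U_zero]

lemma zero_mem_feas {y : ℝ} (hy : 0 ≤ y) : ((0 : ℝ), (fun _ => (0:ℝ) : Fin K → ℝ)) ∈ M.feas y :=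
  ⟨⟨le_rfl, le_min M.vbar_pos.le hy⟩, fun i => ⟨le_rfl, (M.dbar_pos i).le⟩⟩

lemma feas_nonempty_s14 {y : ℝ} (hy : 0 ≤ y) : (M.feas y).Nonempty :=
  ⟨_, M.zero_mem_feas hy⟩

lemma feas_high {y : ℝ} (h : M.vbar ≤ y) : M.feas y = M.feas M.vbar := by
  unfold feas
  rw [min_eq_left h, min_self]

lemma stage_mono_r (hT : 0 < T) {s : ℕ} (hs : s < T) (v : ℝ) (d : Fin K → ℝ)
    {a b : ℝ} (hab : a ≤ b) : M.stage s a v d ≤ M.stage s b v d := by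
  unfold stage
  have := NEM_mono (pp := M.pip s) (pm := M.pim s) (M.A1 s hs).1.le (M.pip_pos hs).le
    (show v + ∑ i, d i - b ≤ v + ∑ i, d i - a by linarith)
  linarith

end EVModel

namespace EVModel

variable {K T : ℕ} {Ω : Type} [MeasurableSpace Ω] (M : EVModel K T Ω)

lemma W_int_aux (k : ℕ)
    (hub : ∀ y rt, 0 ≤ rt → M.W k y rt ≤ M.Abnd k + M.pS * rt)
    (hlb : ∀ y rt, 0 ≤ y → 0 ≤ rt → -M.γ * y ≤ M.W k y rt)
    (hmono : ∀ y, Monotone (fun rt => M.W k y rt)) (hγ : 0 < M.γ) :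
    ∀ y s, 0 ≤ y → s < T → Integrable (fun ω => M.W k y (M.r s ω)) M.μ := by
  haveI := M.prob
  intro y s hy hs
  refine Integrable.mono' (g := fun ω => (M.γ * y + M.Abnd k) + M.pS * M.r s ω)
    ((integrable_const _).add ((M.r_int s).const_mul _))
    (((hmono y).measurable.comp (M.r_meas s)).aestronglyMeasurable) ?_
  refine Filter.Eventually.of_forall (fun ω => ?_)
  show ‖M.W k y (M.r s ω)‖ ≤ (M.γ * y + M.Abnd k) + M.pS * M.r s ω
  rw [Real.norm_eq_abs, abs_le]
  have h1 := hub y (M.r s ω) (M.r_nonneg s ω)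
  have h2 := hlb y (M.r s ω) hy (M.r_nonneg s ω)
  have h3 := M.Abnd_nonneg k
  have h4 : 0 ≤ M.pS * M.r s ω := mul_nonneg M.pS_nonneg (M.r_nonneg s ω)
  have h5 : 0 ≤ M.γ * y := mul_nonneg hγ.le hy
  constructor <;> nlinarith

lemma basics (hT : 0 < T) : ∀ k : ℕ,
    (∀ y rt, BddAbove (M.obj k y rt '' M.feas y)) ∧
    (∀ y rt, 0 ≤ rt → M.W k y rt ≤ M.Abnd k + M.pS * rt) ∧
    (∀ y rt, 0 ≤ y → 0 ≤ rt → -M.γ * y ≤ M.W k y rt) ∧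
    (∀ y, Monotone (fun rt => M.W k y rt)) ∧
    (∀ y s, 0 ≤ y → s < T → Integrable (fun ω => M.W k y (M.r s ω)) M.μ) := by
  haveI := M.prob
  have hγ := M.gamma_pos hT
  intro k
  induction k with
  | zero =>
    have hT1 : T - 1 < T := by omega
    have helt : ∀ y rt, ∀ p ∈ M.feas y, M.obj 0 y rt p ≤ M.Umax + M.pim (T-1) * rt := by
      intro y rt p hp
      have h1 := M.stage_le hT1 rt p.1 hp.1.1 hp.2
      have h2 : p.1 ≤ y := le_trans hp.1.2 (min_le_right _ _)
      show M.stage (T-1) rt p.1 p.2 - M.γ * (y - p.1) ≤ _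
      nlinarith
    have hbdd : ∀ y rt, BddAbove (M.obj 0 y rt '' M.feas y) := by
      intro y rt
      exact ⟨M.Umax + M.pim (T-1) * rt, by rintro a ⟨p, hp, rfl⟩; exact helt y rt p hp⟩
    have hub : ∀ y rt, 0 ≤ rt → M.W 0 y rt ≤ M.Abnd 0 + M.pS * rt := by
      intro y rt hrt
      rw [W_eq]
      have hb : M.Umax + M.pim (T-1) * rt ≤ M.Abnd 0 + M.pS * rt := by
        unfold Abnd
        push_cast
        nlinarith [mul_le_mul_of_nonneg_right (M.pim_le_pS hT1) hrt,
          mul_nonneg M.pS_nonneg M.RS_nonneg]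
      refine Real.sSup_le ?_ (add_nonneg (M.Abnd_nonneg 0) (mul_nonneg M.pS_nonneg hrt))
      rintro a ⟨p, hp, rfl⟩
      exact (helt y rt p hp).trans hb
    have hlb : ∀ y rt, 0 ≤ y → 0 ≤ rt → -M.γ * y ≤ M.W 0 y rt := by
      intro y rt hy hrt
      rw [W_eq]
      refine le_trans ?_ (le_csSup (hbdd y rt)
        (Set.mem_image_of_mem _ (M.zero_mem_feas hy)))
      show -M.γ * y ≤ M.stage (T-1) rt 0 (fun _ => 0) - M.γ * (y - 0)
      rw [M.stage_zero hT1 hrt]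
      nlinarith [mul_nonneg (M.A1 (T-1) hT1).1.le hrt]
    have hmono : ∀ y, Monotone (fun rt => M.W 0 y rt) := by
      intro y a b hab
      simp only [W_eq]
      refine sSup_image_mono' _ _ _ (hbdd y b) (fun p hp => ?_)
      have := M.stage_mono_r hT hT1 p.1 p.2 hab
      show M.stage (T-1) a p.1 p.2 - M.γ * (y - p.1) ≤ M.stage (T-1) b p.1 p.2 - M.γ * (y - p.1)
      linarith
    exact ⟨hbdd, hub, hlb, hmono, M.W_int_aux 0 hub hlb hmono hγ⟩
  | succ k ih =>
    obtain ⟨ibdd, iub, ilb, imono, iint⟩ := ih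
    have htime : T - 2 - k < T := by omega
    have hrind : T - 1 - k < T := by omega
    have hcont_ub : ∀ y', 0 ≤ y' →
        (∫ ω, M.W k y' (M.r (T-1-k) ω) ∂M.μ) ≤ M.Abnd k + M.pS * M.RS := by
      intro y' hy'
      have h1 : (∫ ω, M.W k y' (M.r (T-1-k) ω) ∂M.μ) ≤
          ∫ ω, (M.Abnd k + M.pS * M.r (T-1-k) ω) ∂M.μ :=
        integral_mono (iint y' _ hy' hrind)
          ((integrable_const _).add ((M.r_int _).const_mul _))
          (fun ω => iub y' _ (M.r_nonneg _ ω))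
      rw [integral_add (integrable_const _) ((M.r_int _).const_mul _), integral_const,
        integral_const_mul, probReal_univ] at h1
      simp only [ENNReal.toReal_one, one_smul] at h1
      nlinarith [M.int_r_le_RS hrind, M.pS_nonneg]
    have hcont_lb : ∀ y', 0 ≤ y' →
        -M.γ * y' ≤ ∫ ω, M.W k y' (M.r (T-1-k) ω) ∂M.μ := by
      intro y' hy'
      have h1 := integral_mono (integrable_const (-M.γ * y')) (iint y' _ hy' hrind)
        (fun ω => ilb y' _ hy' (M.r_nonneg _ ω))
      rw [integral_const, probReal_univ] at h1
      simpa using h1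
    have helt : ∀ y rt, ∀ p ∈ M.feas y,
        M.obj (k+1) y rt p ≤ (M.Umax + M.Abnd k + M.pS * M.RS) + M.pim (T-2-k) * rt := by
      intro y rt p hp
      have h1 := M.stage_le htime rt p.1 hp.1.1 hp.2
      have h2 : 0 ≤ y - p.1 := by
        have := le_trans hp.1.2 (min_le_right _ _); linarith
      have h3 := hcont_ub (y - p.1) h2
      show M.stage (T-2-k) rt p.1 p.2 + ∫ ω, M.W k (y - p.1) (M.r (T-1-k) ω) ∂M.μ ≤ _
      linarith
    have hbdd : ∀ y rt, BddAbove (M.obj (k+1) y rt '' M.feas y) := by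
      intro y rt
      exact ⟨_, by rintro a ⟨p, hp, rfl⟩; exact helt y rt p hp⟩
    have hub : ∀ y rt, 0 ≤ rt → M.W (k+1) y rt ≤ M.Abnd (k+1) + M.pS * rt := by
      intro y rt hrt
      rw [W_eq]
      have hb : (M.Umax + M.Abnd k + M.pS * M.RS) + M.pim (T-2-k) * rt ≤
          M.Abnd (k+1) + M.pS * rt := by
        unfold Abnd
        push_cast
        nlinarith [mul_le_mul_of_nonneg_right (M.pim_le_pS htime) hrt]
      refine Real.sSup_le ?_ (add_nonneg (M.Abnd_nonneg (k+1)) (mul_nonneg M.pS_nonneg hrt))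
      rintro a ⟨p, hp, rfl⟩
      exact (helt y rt p hp).trans hb
    have hlb : ∀ y rt, 0 ≤ y → 0 ≤ rt → -M.γ * y ≤ M.W (k+1) y rt := by
      intro y rt hy hrt
      rw [W_eq]
      refine le_trans ?_ (le_csSup (hbdd y rt)
        (Set.mem_image_of_mem _ (M.zero_mem_feas hy)))
      show -M.γ * y ≤ M.stage (T-2-k) rt 0 (fun _ => 0) +
        ∫ ω, M.W k (y - 0) (M.r (T-1-k) ω) ∂M.μ
      rw [M.stage_zero htime hrt, sub_zero]
      have := hcont_lb y hy
      nlinarith [mul_nonneg (M.A1 (T-2-k) htime).1.le hrt]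
    have hmono : ∀ y, Monotone (fun rt => M.W (k+1) y rt) := by
      intro y a b hab
      simp only [W_eq]
      refine sSup_image_mono' _ _ _ (hbdd y b) (fun p hp => ?_)
      have := M.stage_mono_r hT htime p.1 p.2 hab
      show M.stage (T-2-k) a p.1 p.2 + _ ≤ M.stage (T-2-k) b p.1 p.2 + _
      linarith
    exact ⟨hbdd, hub, hlb, hmono, M.W_int_aux (k+1) hub hlb hmono hγ⟩

end EVModel

namespace EVModel

variable {K T : ℕ} {Ω : Type} [MeasurableSpace Ω] (M : EVModel K T Ω)

lemma W_shift (hT : 0 < T) : ∀ k : ℕ, ∀ y rt, ((k : ℝ) + 1) * M.vbar ≤ y →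
    M.W k y rt = M.W k (((k : ℝ) + 1) * M.vbar) rt - M.γ * (y - ((k : ℝ) + 1) * M.vbar) := by
  have hbdd := fun k => (M.basics hT k).1
  have hint := fun k => (M.basics hT k).2.2.2.2
  intro k
  induction k with
  | zero =>
    intro y rt hy
    norm_num at hy ⊢
    have hfeq : M.feas y = M.feas M.vbar := M.feas_high hy
    rw [W_eq, W_eq, hfeq]
    rw [sSup_image_shift' (M.obj 0 y rt) (M.obj 0 M.vbar rt) _
      (-(M.γ * (y - M.vbar))) (M.feas_nonempty_s14 M.vbar_pos.le)
      (hfeq ▸ hbdd 0 y rt) (hbdd 0 M.vbar rt) ?_]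
    · ring
    · intro p hp
      show M.stage (T-1) rt p.1 p.2 - M.γ * (y - p.1) =
        M.stage (T-1) rt p.1 p.2 - M.γ * (M.vbar - p.1) + (-(M.γ * (y - M.vbar)))
      ring
  | succ k ih =>
    intro y rt hy
    push_cast at hy
    set c : ℝ := ((k : ℝ) + 1 + 1) * M.vbar with hc
    have hvb := M.vbar_pos
    have hknn : (0:ℝ) ≤ (k:ℝ) := Nat.cast_nonneg k
    have h1 : M.vbar ≤ c := by rw [hc]; nlinarith
    have hcy : c ≤ y := hy
    have hy0 : M.vbar ≤ y := le_trans h1 hcy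
    have hc0 : 0 ≤ c := le_trans hvb.le h1
    have hfeq : M.feas y = M.feas c := by rw [M.feas_high hy0, M.feas_high h1]
    have hrind : T - 1 - k < T := by omega
    have hkey : ∀ p ∈ M.feas c, M.obj (k+1) y rt p =
        M.obj (k+1) c rt p + (-(M.γ * (y - c))) := by
      intro p hp
      have hp1 : 0 ≤ p.1 := hp.1.1
      have hp2 : p.1 ≤ M.vbar := le_trans hp.1.2 (min_le_left _ _)
      have e1 : ∀ ω, M.W k (y - p.1) (M.r (T-1-k) ω) =
          M.W k (c - p.1) (M.r (T-1-k) ω) + (-(M.γ * (y - c))) := by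
        intro ω
        rw [ih (y - p.1) _ (by rw [hc] at hcy; nlinarith),
          ih (c - p.1) _ (by rw [hc]; nlinarith)]
        ring
      have e2 : (∫ ω, M.W k (y - p.1) (M.r (T-1-k) ω) ∂M.μ) =
          (∫ ω, M.W k (c - p.1) (M.r (T-1-k) ω) ∂M.μ) + (-(M.γ * (y - c))) := by
        haveI := M.prob
        rw [show (fun ω => M.W k (y - p.1) (M.r (T-1-k) ω)) =
          fun ω => M.W k (c - p.1) (M.r (T-1-k) ω) + (-(M.γ * (y - c))) from funext e1]
        rw [integral_add (hint k (c - p.1) (T-1-k) (by nlinarith) hrind) (integrable_const _),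
          integral_const, probReal_univ]
        simp
      show M.stage (T-2-k) rt p.1 p.2 + _ = M.stage (T-2-k) rt p.1 p.2 + _ + _
      rw [e2]; ring
    have hgoal : M.W (k+1) y rt = M.W (k+1) c rt - M.γ * (y - c) := by
      rw [W_eq, W_eq, hfeq]
      rw [sSup_image_shift' (M.obj (k+1) y rt) (M.obj (k+1) c rt) _
        (-(M.γ * (y - c))) (M.feas_nonempty_s14 hc0) (hfeq ▸ hbdd (k+1) y rt)
        (hbdd (k+1) c rt) hkey]
      ring
    have hcast : (((k+1 : ℕ) : ℝ) + 1) * M.vbar = c := by rw [hc]; push_cast; ring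
    rw [hcast]
    exact hgoal

lemma W_lip (hT : 0 < T) (p₀ : ℝ) : ∀ k : ℕ, (∀ j ≤ k, M.pip (T-1-j) ≤ p₀) →
    ∀ z y rt, 0 ≤ z → z ≤ y → y ≤ ((k : ℝ) + 1) * M.vbar →
    M.W k z rt ≤ M.W k y rt + p₀ * (y - z) := by
  have hbdd := fun k => (M.basics hT k).1
  have hint := fun k => (M.basics hT k).2.2.2.2
  intro k
  induction k with
  | zero =>
    intro hp z y rt hz hzy hyb
    norm_num at hyb
    have hT1 : T - 1 < T := by omega
    have hA1 := M.A1 (T-1) hT1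
    rw [W_eq, W_eq]
    refine sSup_image_le' _ _ _ _ (p₀ * (y - z)) (M.feas_nonempty_s14 hz) (hbdd 0 y rt) ?_
    rintro ⟨v, d⟩ hp'
    obtain ⟨⟨hv0, hv1⟩, hd⟩ := hp'
    simp only at hv0 hv1 hd
    have hvz : v ≤ z := le_trans hv1 (min_le_right _ _)
    refine ⟨(v + (y - z), d), ⟨⟨?_, ?_⟩, hd⟩, ?_⟩
    · show (0:ℝ) ≤ v + (y - z); linarith
    · show v + (y - z) ≤ min M.vbar y
      exact le_min (by linarith) (by linarith)
    show M.stage (T-1) rt v d - M.γ * (z - v) ≤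
      (M.stage (T-1) rt (v + (y - z)) d - M.γ * (y - (v + (y - z)))) + p₀ * (y - z)
    have harg : v + (y - z) + ∑ i, d i - rt = (v + ∑ i, d i - rt) + (y - z) := by ring
    have hnem := NEM_add_le hA1.2.1 (v + ∑ i, d i - rt) (e := y - z) (by linarith)
    have hpp : M.pip (T-1) * (y - z) ≤ p₀ * (y - z) :=
      mul_le_mul_of_nonneg_right (by simpa using hp 0 (Nat.zero_le 0)) (by linarith)
    unfold stage
    rw [harg]
    linarith
  | succ k ih =>
    intro hp z y rt hz hzy hyb
    push_cast at hyb
    have htime : T - 2 - k < T := by omega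
    have hrind : T - 1 - k < T := by omega
    have hA1 := M.A1 (T-2-k) htime
    have hvb := M.vbar_pos
    have hpstep : M.pip (T-2-k) ≤ p₀ := by
      have := hp (k+1) le_rfl
      rwa [show T - 1 - (k+1) = T - 2 - k from by omega] at this
    rw [W_eq, W_eq]
    refine sSup_image_le' _ _ _ _ (p₀ * (y - z)) (M.feas_nonempty_s14 hz) (hbdd (k+1) y rt) ?_
    rintro ⟨v, d⟩ hp'
    obtain ⟨⟨hv0, hv1⟩, hd⟩ := hp'
    simp only at hv0 hv1 hd
    have hvz : v ≤ z := le_trans hv1 (min_le_right _ _)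
    have hvvb : v ≤ M.vbar := le_trans hv1 (min_le_left _ _)
    set e : ℝ := min (y - z) (M.vbar - v) with he
    have he0 : 0 ≤ e := le_min (by linarith) (by linarith)
    have he1 : e ≤ y - z := min_le_left _ _
    have he2 : e ≤ M.vbar - v := min_le_right _ _
    refine ⟨(v + e, d), ⟨⟨?_, ?_⟩, hd⟩, ?_⟩
    · show (0:ℝ) ≤ v + e; linarith
    · show v + e ≤ min M.vbar y
      exact le_min (by linarith) (by linarith)
    show M.stage (T-2-k) rt v d + (∫ ω, M.W k (z - v) (M.r (T-1-k) ω) ∂M.μ) ≤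
      (M.stage (T-2-k) rt (v + e) d + (∫ ω, M.W k (y - (v + e)) (M.r (T-1-k) ω) ∂M.μ)) +
        p₀ * (y - z)
    have harg : v + e + ∑ i, d i - rt = (v + ∑ i, d i - rt) + e := by ring
    have hnem := NEM_add_le hA1.2.1 (v + ∑ i, d i - rt) he0
    have hpe : M.pip (T-2-k) * e ≤ p₀ * e := mul_le_mul_of_nonneg_right hpstep he0
    have hcont : ∀ ω, M.W k (z - v) (M.r (T-1-k) ω) ≤
        M.W k (y - (v + e)) (M.r (T-1-k) ω) + p₀ * ((y - (v + e)) - (z - v)) := by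
      intro ω
      rcases min_cases (y - z) (M.vbar - v) with ⟨hmin, -⟩ | ⟨hmin, hle⟩
      · rw [← he] at hmin
        have hyz : y - (v + e) = z - v := by rw [hmin]; ring
        rw [hyz]
        simp
      · rw [← he] at hmin
        have hyv : y - (v + e) = y - M.vbar := by rw [hmin]; ring
        rw [hyv]
        refine ih (fun j hj => hp j (by omega)) (z - v) (y - M.vbar) _ (by linarith)
          (by linarith) (by linarith)
    have hcint : (∫ ω, M.W k (z - v) (M.r (T-1-k) ω) ∂M.μ) ≤
        (∫ ω, M.W k (y - (v + e)) (M.r (T-1-k) ω) ∂M.μ) + p₀ * ((y - (v + e)) - (z - v)) := by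
      haveI := M.prob
      have hyve : 0 ≤ y - (v + e) := by linarith
      have hint2 : Integrable (fun ω => M.W k (y - (v + e)) (M.r (T-1-k) ω) +
          p₀ * ((y - (v + e)) - (z - v))) M.μ :=
        (hint k (y - (v+e)) (T-1-k) hyve hrind).add (integrable_const _)
      have h := integral_mono (hint k (z - v) (T-1-k) (by linarith) hrind) hint2 hcont
      rwa [integral_add (hint k (y - (v+e)) (T-1-k) hyve hrind) (integrable_const _),
        integral_const, probReal_univ, one_smul] at h
    unfold stage
    rw [harg]
    have hsum : p₀ * e + p₀ * ((y - (v + e)) - (z - v)) = p₀ * (y - z) := by ring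
    linarith

end EVModel

/-- **Theorem 2 (procrastination threshold under non-increasing purchase prices).**
Let `t < T - 1` and suppose the future purchase prices are non-increasing:
`π_{s+1}⁺ ≤ π_s⁺` for all `s ∈ {t, …, T-2}`.  Then the procrastination threshold is
maximal: `-π_t⁺ ∈ h_{t+1}((T - t - 1) v̄)`, i.e. one may take `τ_t = (T - t - 1) v̄`,
so that in the net consumption zone the optimal EV charging is
`v* = min {v̄, max {y_t - (T - t - 1) v̄, 0}}` (the prosumer defers charging as long as
the remaining demand can still be fulfilled in the remaining periods). -/
theorem thm2_procrastination_threshold (K T : ℕ) (Ω : Type) [MeasurableSpace Ω]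
    (M : EVModel K T Ω) (t : ℕ) (ht : t < T - 1)
    (hprice : ∀ s, t ≤ s → s ≤ T - 2 → M.pip (s + 1) ≤ M.pip s) :
    -M.pip t ∈ M.h (t + 1) (((T - t - 1 : ℕ) : ℝ) * M.vbar) := by
  haveI := M.prob
  have hT : 0 < T := by omega
  have htT : t < T := by omega
  have ht1T : t + 1 < T := by omega
  set k : ℕ := T - 2 - t with hk
  have hkT : T - 1 - (t + 1) = k := by omega
  have hbdd := fun k' => (M.basics hT k').1
  have hint := fun k' => (M.basics hT k').2.2.2.2
  -- the threshold point
  set y₀ : ℝ := ((k : ℝ) + 1) * M.vbar with hy₀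
  have hy₀nn : 0 ≤ y₀ := by
    have := M.vbar_pos
    have : (0:ℝ) ≤ (k:ℝ) := Nat.cast_nonneg k
    rw [hy₀]; nlinarith [M.vbar_pos]
  have hcast : ((T - t - 1 : ℕ) : ℝ) = (k : ℝ) + 1 := by
    rw [show T - t - 1 = k + 1 from by omega]; push_cast; ring
  have hVbar : ∀ z, M.Vbar (t+1) z = ∫ ω, M.W k z (M.r (t+1) ω) ∂M.μ := by
    intro z
    unfold EVModel.Vbar EVModel.V
    rw [hkT]
  -- price chain
  have chain : ∀ m, t + m ≤ T - 1 → M.pip (t + m) ≤ M.pip t := by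
    intro m
    induction m with
    | zero => simp
    | succ m ihm =>
      intro hm
      have h1 : M.pip (t + m + 1) ≤ M.pip (t + m) := hprice (t + m) (by omega) (by omega)
      have h2 := ihm (by omega)
      calc M.pip (t + (m+1)) = M.pip (t + m + 1) := by ring_nf
        _ ≤ M.pip (t + m) := h1
        _ ≤ M.pip t := h2
  have hp₀ : ∀ j ≤ k, M.pip (T - 1 - j) ≤ M.pip t := by
    intro j hj
    have h1 : T - 1 - j = t + (T - 1 - j - t) := by omega
    rw [h1]
    exact chain _ (by omega)
  -- superdifferential membership
  intro z hz
  rw [hcast]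
  rcases le_total z y₀ with hzy | hzy
  · -- below the threshold: use the Lipschitz bound
    have hlip : ∀ ω, M.W k z (M.r (t+1) ω) ≤
        M.W k y₀ (M.r (t+1) ω) + M.pip t * (y₀ - z) :=
      fun ω => M.W_lip hT (M.pip t) k hp₀ z y₀ _ hz hzy (le_of_eq hy₀)
    have h1 : (∫ ω, M.W k z (M.r (t+1) ω) ∂M.μ) ≤
        (∫ ω, M.W k y₀ (M.r (t+1) ω) ∂M.μ) + M.pip t * (y₀ - z) := by
      have hint2 : Integrable (fun ω => M.W k y₀ (M.r (t+1) ω) + M.pip t * (y₀ - z)) M.μ :=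
        (hint k y₀ (t+1) hy₀nn ht1T).add (integrable_const _)
      have h := integral_mono (hint k z (t+1) hz ht1T) hint2 hlip
      rwa [integral_add (hint k y₀ (t+1) hy₀nn ht1T) (integrable_const _),
        integral_const, probReal_univ, one_smul] at h
    rw [hVbar z, hVbar y₀]
    have : -M.pip t * (z - (((k:ℝ)+1) * M.vbar)) = M.pip t * (y₀ - z) := by rw [hy₀]; ring
    rw [hy₀] at h1 ⊢
    linarith [h1]
  · -- above the threshold: exact slope -γ
    have hshift : ∀ ω, M.W k z (M.r (t+1) ω) =
        M.W k y₀ (M.r (t+1) ω) + (-(M.γ * (z - y₀))) := by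
      intro ω
      rw [M.W_shift hT k z _ (le_of_eq hy₀ |>.trans hzy)]
      rw [hy₀]
      ring
    have h1 : (∫ ω, M.W k z (M.r (t+1) ω) ∂M.μ) =
        (∫ ω, M.W k y₀ (M.r (t+1) ω) ∂M.μ) - M.γ * (z - y₀) := by
      rw [show (fun ω => M.W k z (M.r (t+1) ω)) =
        fun ω => M.W k y₀ (M.r (t+1) ω) + (-(M.γ * (z - y₀))) from funext hshift]
      rw [integral_add (hint k y₀ (t+1) hy₀nn ht1T) (integrable_const _),
        integral_const, probReal_univ, one_smul]
      ring
    rw [hVbar z, hVbar y₀]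
    have hγ : M.pip t ≤ M.γ := (M.A1 t htT).2.2.le
    rw [hy₀] at h1 ⊢
    nlinarith [sub_nonneg.mpr hzy, hy₀ ▸ hzy]
end
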